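/- Let V be a finite-dimensional vector space over a field k, and let F and G be two finite decreasing filtrations of V. Then F and G are n-opposed (i.e. Gr_G^q Gr_F^p V = 0 whenever p + q ≠ n) if and only if for all integers p, q with p + q = n + 1 one has F^p ⊕ G^q = V (internal direct sum). -/

import Mathlib

open Submodule

/-- The bigraded piece `Gr_G^q Gr_F^p V`, realized via the canonical (Zassenhaus)
isomorphism as `(F^p ⊓ G^q) / ((F^{p+1} ⊓ G^q) ⊔ (F^p ⊓ G^{q+1}))`. -/
abbrev GrGr {k V : Type*} [Field k] [AddCommGroup V] [Module k V]
    (F G : ℤ → Submodule k V) (p q : ℤ) :=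
  ↥(F p ⊓ G q) ⧸
    Submodule.comap (F p ⊓ G q).subtype ((F (p + 1) ⊓ G q) ⊔ (F p ⊓ G (q + 1)))

/-- Two finite (exhaustive) decreasing filtrations `F`, `G` of a finite-dimensional
vector space are `n`-opposed (i.e. `Gr_G^q Gr_F^p V = 0` whenever `p + q ≠ n`)
iff `F^p ⊕ G^q = V` (internal direct sum) for all `p + q = n + 1`. -/
theorem two_filtrations_n_opposed_iff_isCompl
    {k V : Type*} [Field k] [AddCommGroup V] [Module k V] [FiniteDimensional k V]
    (F G : ℤ → Submodule k V)
    (hF : ∀ p q : ℤ, p ≤ q → F q ≤ F p) (hG : ∀ p q : ℤ, p ≤ q → G q ≤ G p)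
    (hFtop : ∃ a : ℤ, F a = ⊤) (hFbot : ∃ b : ℤ, F b = ⊥)
    (hGtop : ∃ a : ℤ, G a = ⊤) (hGbot : ∃ b : ℤ, G b = ⊥)
    (n : ℤ) :
    (∀ p q : ℤ, p + q ≠ n → Subsingleton (GrGr F G p q)) ↔
      ∀ p q : ℤ, p + q = n + 1 → IsCompl (F p) (G q) := by
  obtain ⟨aF, haF⟩ := hFtop
  obtain ⟨bF, hFb⟩ := hFbot
  obtain ⟨aG, haG⟩ := hGtop
  obtain ⟨bG, hGb⟩ := hGbot
  have key : ∀ p q : ℤ, Subsingleton (GrGr F G p q) ↔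
      F p ⊓ G q ≤ (F (p + 1) ⊓ G q) ⊔ (F p ⊓ G (q + 1)) := by
    intro p q
    rw [Submodule.Quotient.subsingleton_iff, Submodule.comap_subtype_eq_top]
  constructor
  · intro h
    have h' : ∀ p q : ℤ, p + q ≠ n →
        F p ⊓ G q ≤ (F (p + 1) ⊓ G q) ⊔ (F p ⊓ G (q + 1)) :=
      fun p q hpq => (key p q).1 (h p q hpq)
    -- Part 1: trivial intersection above the diagonal
    have hzero : ∀ (m : ℕ) (p q : ℤ), n + 1 ≤ p + q → bF + bG - p - q ≤ (m : ℤ) →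
        F p ⊓ G q = ⊥ := by
      intro m
      induction m with
      | zero =>
        intro p q h1 h2
        rcases le_or_gt bF p with hp | hp
        · exact le_bot_iff.mp ((inf_le_left.trans (hF bF p hp)).trans_eq hFb)
        · exact le_bot_iff.mp ((inf_le_right.trans (hG bG q (by omega))).trans_eq hGb)
      | succ m ih =>
        intro p q h1 h2
        rcases le_or_gt bF p with hp | hp
        · exact le_bot_iff.mp ((inf_le_left.trans (hF bF p hp)).trans_eq hFb)
        rcases le_or_gt bG q with hq | hq
        · exact le_bot_iff.mp ((inf_le_right.trans (hG bG q hq)).trans_eq hGb)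
        have e1 := ih (p + 1) q (by omega) (by omega)
        have e2 := ih p (q + 1) (by omega) (by omega)
        refine le_bot_iff.mp ((h' p q (by omega)).trans ?_)
        rw [e1, e2, sup_idem]
    -- Part 2: full sum below the diagonal
    have htop : ∀ (m : ℕ) (p q : ℤ), p + q ≤ n + 1 → p + q - aF - aG ≤ (m : ℤ) →
        F p ⊔ G q = ⊤ := by
      intro m
      induction m with
      | zero =>
        intro p q h1 h2
        rcases le_or_gt p aF with hp | hp
        · exact top_le_iff.mp ((haF.symm.trans_le (hF p aF hp)).trans le_sup_left)
        · exact top_le_iff.mp ((haG.symm.trans_le (hG q aG (by omega))).trans le_sup_right)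
      | succ m ih =>
        intro p q h1 h2
        rcases le_or_gt p aF with hp | hp
        · exact top_le_iff.mp ((haF.symm.trans_le (hF p aF hp)).trans le_sup_left)
        rcases le_or_gt q aG with hq | hq
        · exact top_le_iff.mp ((haG.symm.trans_le (hG q aG hq)).trans le_sup_right)
        have h1' : F (p - 1) ⊔ G q = ⊤ := ih (p - 1) q (by omega) (by omega)
        have h2' : F p ⊔ G (q - 1) = ⊤ := ih p (q - 1) (by omega) (by omega)
        have hgr : F (p - 1) ⊓ G (q - 1) ≤ (F p ⊓ G (q - 1)) ⊔ (F (p - 1) ⊓ G q) := by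
          have := h' (p - 1) (q - 1) (by omega)
          simpa using this
        rw [eq_top_iff]
        intro x _
        obtain ⟨f, hf, g, hg, hfg⟩ := mem_sup.mp (h1' ▸ mem_top (x := x))
        obtain ⟨f', hf', g', hg', hfg'⟩ := mem_sup.mp (h2' ▸ mem_top (x := f))
        have hg'F : g' ∈ F (p - 1) := by
          have : g' = f - f' := by rw [← hfg']; abel
          rw [this]
          exact (F (p - 1)).sub_mem hf (hF (p - 1) p (by omega) hf')
        have hle : (F p ⊓ G (q - 1)) ⊔ (F (p - 1) ⊓ G q) ≤ F p ⊔ G q :=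
          sup_le (inf_le_left.trans le_sup_left) (inf_le_right.trans le_sup_right)
        have hg'mem : g' ∈ F p ⊔ G q := hle (hgr (mem_inf.mpr ⟨hg'F, hg'⟩))
        rw [← hfg, ← hfg']
        exact add_mem (add_mem (le_sup_left (a := F p) hf') hg'mem)
          (le_sup_right (b := G q) hg)
    intro p q hpq
    constructor
    · rw [disjoint_iff]
      exact hzero (bF + bG - p - q).toNat p q (by omega) (by omega)
    · rw [codisjoint_iff]
      exact htop (p + q - aF - aG).toNat p q (by omega) (by omega)
  · intro h p q hpq
    rw [key]
    rcases lt_or_gt_of_ne hpq with hlt | hgt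
    · -- p + q < n
      intro x hx
      obtain ⟨hxF, hxG⟩ := mem_inf.mp hx
      have hcod : F (p + 1) ⊔ G (n - p) = ⊤ :=
        codisjoint_iff.mp (h (p + 1) (n - p) (by omega)).2
      obtain ⟨a, ha, b, hb, hab⟩ := mem_sup.mp (hcod ▸ mem_top (x := x))
      have hbF : b ∈ F p := by
        have : b = x - a := by rw [← hab]; abel
        rw [this]
        exact (F p).sub_mem hxF (hF p (p + 1) (by omega) ha)
      have hbG : b ∈ G (q + 1) := hG (q + 1) (n - p) (by omega) hb
      have haG : a ∈ G q := by
        have : a = x - b := by rw [← hab]; abel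
        rw [this]
        exact (G q).sub_mem hxG (hG q (q + 1) (by omega) hbG)
      exact mem_sup.mpr ⟨a, mem_inf.mpr ⟨ha, haG⟩, b, mem_inf.mpr ⟨hbF, hbG⟩, hab⟩
    · -- p + q > n
      intro x hx
      obtain ⟨hxF, hxG⟩ := mem_inf.mp hx
      have hd : F p ⊓ G (n + 1 - p) = ⊥ :=
        disjoint_iff.mp (h p (n + 1 - p) (by omega)).1
      have hx0 : x = 0 := by
        have : x ∈ F p ⊓ G (n + 1 - p) :=
          mem_inf.mpr ⟨hxF, hG (n + 1 - p) q (by omega) hxG⟩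
        simpa [hd] using this
      rw [hx0]
      exact zero_mem _
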